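/- Let θ : ℝ → ℂ be a Schwartz function and let 1/2 < b < 1. Then there exists a constant c > 0 such that for every T with 0 < T ≤ 1, ∫_ℝ ⟨τ⟩^{2b} · T² · |θ̂(Tτ)|² dτ ≤ c · T^{1−2b}, where θ̂(τ) = ∫_ℝ e^{−itτ} θ(t) dt is the Fourier transform of θ. -/

import Mathlib

open MeasureTheory

/-- The Japanese bracket `⟨x⟩ = (1 + |x|²)^{1/2}`. -/
noncomputable def jb (x : ℝ) : ℝ := Real.sqrt (1 + x ^ 2)

/-- The Fourier transform `θ̂(τ) = ∫ e^{−itτ} θ(t) dt`. -/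
noncomputable def ftransform (θ : ℝ → ℂ) (τ : ℝ) : ℂ :=
  ∫ t : ℝ, Complex.exp (-Complex.I * t * τ) * θ t

open Real FourierTransform in
lemma ftransform_eq_fourierIntegral (θ : ℝ → ℂ) (σ : ℝ) :
    ftransform θ σ = 𝓕 θ (σ / (2 * π)) := by
  rw [Real.fourier_real_eq]
  unfold ftransform
  refine integral_congr_ae (Filter.Eventually.of_forall fun t => ?_)
  simp only [Circle.smul_def, Real.fourierChar_apply]
  congr 1
  have h : 2 * π * -(t * (σ / (2 * π))) = -(t * σ) := by
    field_simp
  rw [h]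
  push_cast
  ring

lemma schwartz_decay_bound (g : SchwartzMap ℝ ℂ) :
    ∃ C, 0 < C ∧ ∀ x : ℝ, ‖g x‖ ≤ C / (1 + x ^ 2) := by
  obtain ⟨C0, hC0, h0⟩ := g.decay 0 0
  obtain ⟨C2, hC2, h2⟩ := g.decay 2 0
  refine ⟨C0 + C2, by positivity, fun x => ?_⟩
  have e0 := h0 x
  have e2 := h2 x
  simp only [norm_iteratedFDeriv_zero, pow_zero, one_mul] at e0 e2
  rw [le_div_iff₀ (by positivity)]
  have hx : ‖x‖ ^ 2 = x ^ 2 := by rw [Real.norm_eq_abs, sq_abs]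
  rw [hx] at e2
  nlinarith [norm_nonneg (g x)]

open Real in
lemma ftransform_decay (θ : SchwartzMap ℝ ℂ) :
    ∃ C, 0 < C ∧ ∀ σ : ℝ, ‖ftransform (fun t => θ t) σ‖ ≤ C / (1 + σ ^ 2) := by
  obtain ⟨C, hC, hbd⟩ := schwartz_decay_bound (SchwartzMap.fourierTransformCLM ℝ θ)
  refine ⟨4 * π ^ 2 * C, by positivity, fun σ => ?_⟩
  have hπ : (0:ℝ) < π := Real.pi_pos
  have h1 : ‖ftransform (fun t => θ t) σ‖
      ≤ C / (1 + (σ / (2 * π)) ^ 2) := by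
    have := hbd (σ / (2 * π))
    rw [SchwartzMap.fourierTransformCLM_apply] at this
    rw [ftransform_eq_fourierIntegral]
    simpa [SchwartzMap.fourier_coe] using this
  refine h1.trans ?_
  rw [div_le_div_iff₀ (by positivity) (by positivity)]
  have expand : 4 * π ^ 2 * C * (1 + (σ / (2 * π)) ^ 2) = 4 * π ^ 2 * C + C * σ ^ 2 := by
    field_simp
    ring
  rw [expand]
  have h4 : (1:ℝ) ≤ 4 * π ^ 2 := by nlinarith [Real.pi_gt_three]
  nlinarith [mul_le_mul_of_nonneg_left h4 hC.le]

/-- For a Schwartz cutoff `θ` and `1/2 < b < 1`, the rescaled cutoffs `θ_T(t) = θ(t/T)`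
satisfy `∫ ⟨τ⟩^{2b} T² |θ̂(Tτ)|² dτ ≤ c T^{1−2b}` uniformly for `0 < T ≤ 1`. -/
theorem rescaled_cutoff_Xb_bound (θ : SchwartzMap ℝ ℂ) (b : ℝ) (hb1 : 1 / 2 < b)
    (hb2 : b < 1) :
    ∃ c : ℝ, 0 < c ∧ ∀ T : ℝ, 0 < T → T ≤ 1 →
      ∫ τ : ℝ, jb τ ^ (2 * b) * (T ^ 2 * ‖ftransform (fun t => θ t) (T * τ)‖ ^ 2) ≤
        c * T ^ (1 - 2 * b) := by
  obtain ⟨C, hC, hbd⟩ := ftransform_decay θ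
  have hπ : (0:ℝ) < Real.pi := Real.pi_pos
  refine ⟨C ^ 2 * Real.pi, by positivity, fun T hT hT1 => ?_⟩
  have hb0 : (0:ℝ) ≤ b := by linarith
  -- the dominating function
  set g : ℝ → ℝ := fun τ => C ^ 2 * T ^ (2 - 2 * b) * (1 + (T * τ) ^ 2)⁻¹ with hg
  have hint : Integrable g := by
    have : Integrable (fun τ : ℝ => (1 + (T * τ) ^ 2)⁻¹) :=
      integrable_inv_one_add_sq.comp_mul_left' hT.ne'
    exact this.const_mul _
  -- pointwise bound
  have hpt : ∀ τ : ℝ,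
      jb τ ^ (2 * b) * (T ^ 2 * ‖ftransform (fun t => θ t) (T * τ)‖ ^ 2) ≤ g τ := by
    intro τ
    set S : ℝ := 1 + (T * τ) ^ 2 with hSdef
    have hS1 : (1:ℝ) ≤ S := by nlinarith [sq_nonneg (T * τ)]
    have hS0 : (0:ℝ) < S := by linarith
    set A : ℝ := ‖ftransform (fun t => θ t) (T * τ)‖ with hAdef
    have hA0 : 0 ≤ A := norm_nonneg _
    have hA : A ≤ C / S := hbd (T * τ)
    have hA2 : A ^ 2 ≤ C ^ 2 / S ^ 2 := by
      rw [← div_pow]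
      exact pow_le_pow_left₀ hA0 hA 2
    -- jb τ ^ (2b) = (1+τ²)^b
    have hjb : jb τ ^ (2 * b) = (1 + τ ^ 2) ^ b := by
      rw [jb, Real.sqrt_eq_rpow, ← Real.rpow_mul (by positivity)]
      congr 1
      ring
    have hts : T ^ (2 * b) * (1 + τ ^ 2) ^ b = (T ^ 2 * (1 + τ ^ 2)) ^ b := by
      rw [Real.mul_rpow (by positivity) (by positivity)]
      congr 1
      rw [← Real.rpow_natCast T 2, ← Real.rpow_mul hT.le]
      norm_num
    have hmono : (T ^ 2 * (1 + τ ^ 2)) ^ b ≤ S ^ b := by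
      apply Real.rpow_le_rpow (by positivity) ?_ hb0
      nlinarith [sq_nonneg τ, sq_nonneg (T * τ)]
    have h1 : (1 + τ ^ 2) ^ b ≤ T ^ (-(2 * b)) * S ^ b := by
      have key : T ^ (2 * b) * (1 + τ ^ 2) ^ b ≤ S ^ b := hts ▸ hmono
      rw [Real.rpow_neg hT.le, inv_mul_eq_div, le_div_iff₀ (Real.rpow_pos_of_pos hT _)]
      linarith [key, mul_comm ((1 + τ ^ 2) ^ b) (T ^ (2 * b))]
    have h2 : S ^ b ≤ S := by
      calc S ^ b ≤ S ^ (1:ℝ) := Real.rpow_le_rpow_of_exponent_le hS1 hb2.le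
        _ = S := Real.rpow_one S
    have hTT : T ^ (-(2 * b)) * T ^ 2 = T ^ (2 - 2 * b) := by
      rw [← Real.rpow_natCast T 2, ← Real.rpow_add hT]
      congr 1
      push_cast
      ring
    calc jb τ ^ (2 * b) * (T ^ 2 * A ^ 2)
        = (1 + τ ^ 2) ^ b * (T ^ 2 * A ^ 2) := by rw [hjb]
      _ ≤ (T ^ (-(2 * b)) * S ^ b) * (T ^ 2 * (C ^ 2 / S ^ 2)) := by
          apply mul_le_mul h1 ?_ (by positivity) ?_
          · exact mul_le_mul_of_nonneg_left hA2 (by positivity)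
          · have := Real.rpow_nonneg hS0.le b
            positivity
      _ ≤ (T ^ (-(2 * b)) * S) * (T ^ 2 * (C ^ 2 / S ^ 2)) := by
          apply mul_le_mul_of_nonneg_right ?_ (by positivity)
          exact mul_le_mul_of_nonneg_left h2 (by positivity)
      _ = C ^ 2 * (T ^ (-(2 * b)) * T ^ 2) * S⁻¹ := by
          field_simp
      _ = g τ := by rw [hTT, hg]
  -- integrate
  have hnn : ∀ τ : ℝ, 0 ≤ jb τ ^ (2 * b) *
      (T ^ 2 * ‖ftransform (fun t => θ t) (T * τ)‖ ^ 2) := fun τ =>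
    mul_nonneg (Real.rpow_nonneg (Real.sqrt_nonneg _) _) (by positivity)
  have step1 : ∫ τ : ℝ, jb τ ^ (2 * b) *
      (T ^ 2 * ‖ftransform (fun t => θ t) (T * τ)‖ ^ 2) ≤ ∫ τ : ℝ, g τ :=
    integral_mono_of_nonneg (Filter.Eventually.of_forall hnn) hint
      (Filter.Eventually.of_forall hpt)
  have step2 : ∫ τ : ℝ, g τ = C ^ 2 * Real.pi * T ^ (1 - 2 * b) := by
    rw [hg]
    simp only [integral_const_mul]
    rw [MeasureTheory.Measure.integral_comp_mul_left (fun x : ℝ => (1 + x ^ 2)⁻¹) T,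
      integral_univ_inv_one_add_sq, smul_eq_mul, abs_of_pos (inv_pos.2 hT)]
    have hTT2 : T ^ (2 - 2 * b) * T⁻¹ = T ^ (1 - 2 * b) := by
      rw [← Real.rpow_neg_one T, ← Real.rpow_add hT]
      congr 1
      ring
    rw [← hTT2]
    ring
  rw [step2] at step1
  exact step1
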